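/- Let K be a positive natural number, p : Fin K → ℝ a probability vector with p_k > 0 for all k and ∑_k p_k = 1, and a : Fin K → ℝ a prior with a_k > 0 for all k. For each natural number n define the Dirichlet posterior parameters α_k(n) = a_k + n·p_k and S(n) = ∑_k α_k(n). Then the aleatoric uncertainty converges to the true entropy of the data distribution: lim_{n→∞} ∑_k (α_k(n)/S(n)) · (ψ(S(n)+1) − ψ(α_k(n)+1)) = ∑_k negMulLog(p_k). (Parametric Epistemic Convergence, aleatoric part: as training samples in a leaf grow, aleatoric uncertainty converges to the true data entropy.) -/

import Mathlib

/-- The digamma function: the logarithmic derivative of the Gamma function. -/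
noncomputable def digamma (x : ℝ) : ℝ :=
  deriv (fun t => Real.log (Real.Gamma t)) x

open Filter Real Set

lemma diffAt_logGamma {x : ℝ} (hx : 0 < x) :
    DifferentiableAt ℝ (fun t => Real.log (Real.Gamma t)) x := by
  have h1 : DifferentiableAt ℝ Real.Gamma x :=
    Real.differentiableAt_Gamma (fun m => by
      have h0 : (0:ℝ) ≤ m := Nat.cast_nonneg m
      exact ne_of_gt (by linarith))
  exact (Real.differentiableAt_log (Real.Gamma_pos_of_pos hx).ne').comp x h1

lemma slope_logGamma {x : ℝ} (hx : 0 < x) :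
    Real.log (Real.Gamma (x + 1)) - Real.log (Real.Gamma x) = Real.log x := by
  rw [Real.Gamma_add_one hx.ne', Real.log_mul hx.ne' (Real.Gamma_pos_of_pos hx).ne']
  ring

lemma digamma_sandwich {x : ℝ} (hx : 0 < x) :
    Real.log x ≤ digamma (x + 1) ∧ digamma (x + 1) ≤ Real.log (x + 1) := by
  have hconv := Real.convexOn_log_Gamma
  have hx1 : (0:ℝ) < x + 1 := by linarith
  have hmemx : x ∈ Ioi (0:ℝ) := hx
  have hmem1 : x + 1 ∈ Ioi (0:ℝ) := hx1
  have hmem2 : x + 1 + 1 ∈ Ioi (0:ℝ) := by simp; linarith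
  constructor
  · have h := hconv.slope_le_deriv hmemx hmem1 (by linarith) (diffAt_logGamma hx1)
    rw [slope_def_field] at h
    simpa [Function.comp_def, digamma, slope_logGamma hx] using h
  · have h := hconv.deriv_le_slope hmem1 hmem2 (by linarith) (diffAt_logGamma hx1)
    rw [slope_def_field] at h
    simpa [Function.comp_def, digamma, slope_logGamma hx1] using h

/-- `digamma (x+1) - log x → 0` as `x → ∞`. -/
lemma digamma_sub_log_tendsto :
    Tendsto (fun x : ℝ => digamma (x + 1) - Real.log x) atTop (nhds 0) := by
  have hub : Tendsto (fun x : ℝ => Real.log (x + 1) - Real.log x) atTop (nhds 0) := by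
    have h1 : Tendsto (fun x : ℝ => (x + 1) / x) atTop (nhds 1) := by
      have this : Tendsto (fun x : ℝ => (1:ℝ) + x⁻¹) atTop (nhds (1 + 0)) :=
        tendsto_const_nhds.add tendsto_inv_atTop_zero
      have heq : ∀ᶠ x : ℝ in atTop, (1 : ℝ) + x⁻¹ = (x + 1) / x := by
        filter_upwards [eventually_gt_atTop 0] with x hx
        field_simp
      simpa using (this.congr' heq)
    have h2 : Tendsto (fun x : ℝ => Real.log ((x + 1) / x)) atTop (nhds 0) := by
      have := (Real.continuousAt_log (by norm_num : (1:ℝ) ≠ 0)).tendsto.comp h1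
      simpa [Function.comp_def] using this
    apply h2.congr'
    filter_upwards [eventually_gt_atTop 0] with x hx
    rw [Real.log_div (by linarith) hx.ne']
  apply tendsto_of_tendsto_of_tendsto_of_le_of_le' tendsto_const_nhds hub
  · filter_upwards [eventually_gt_atTop 0] with x hx
    have := (digamma_sandwich hx).1
    linarith
  · filter_upwards [eventually_gt_atTop 0] with x hx
    have := (digamma_sandwich hx).2
    linarith

lemma ratio_tendsto (c b A : ℝ) (hA : 0 < A) :
    Tendsto (fun n : ℕ => (c + (n : ℝ) * b) / (A + n)) atTop (nhds b) := by
  have h1 : Tendsto (fun n : ℕ => (c / n + b) / (A / n + 1)) atTop (nhds b) := by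
    have hc : Tendsto (fun n : ℕ => c / (n : ℝ) + b) atTop (nhds b) := by
      simpa using (tendsto_const_div_atTop_nhds_zero_nat c).add tendsto_const_nhds
    have hd : Tendsto (fun n : ℕ => A / (n : ℝ) + 1) atTop (nhds 1) := by
      simpa using (tendsto_const_div_atTop_nhds_zero_nat A).add
        (tendsto_const_nhds : Tendsto (fun _ : ℕ => (1:ℝ)) atTop (nhds 1))
    simpa [Pi.div_def] using hc.div hd one_ne_zero
  apply h1.congr'
  filter_upwards [eventually_ge_atTop 1] with n hn
  have hn0 : (0:ℝ) < (n : ℝ) := by exact_mod_cast hn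
  have hd : A + (n:ℝ) ≠ 0 := by positivity
  field_simp

/-- **Parametric Epistemic Convergence (aleatoric part).** For Dirichlet posterior
parameters `α k (n) = a k + n * p k` with positive prior `a` and true data distribution
`p` (a positive probability vector), the analytical aleatoric uncertainty
`∑ k, (α k / S)(ψ(S+1) − ψ(α k + 1))` converges, as the number of training samples
`n → ∞`, to the Shannon entropy `∑ k, negMulLog (p k)` of the true data
distribution. -/
theorem aleatoric_tendsto_entropy (K : ℕ) (hK : 0 < K)
    (p : Fin K → ℝ) (hp : ∀ k, 0 < p k) (hpsum : ∑ k, p k = 1)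
    (a : Fin K → ℝ) (ha : ∀ k, 0 < a k) :
    Filter.Tendsto
      (fun n : ℕ =>
        ∑ k, ((a k + n * p k) / ∑ j, (a j + n * p j)) *
          (digamma ((∑ j, (a j + n * p j)) + 1) - digamma ((a k + n * p k) + 1)))
      Filter.atTop (nhds (∑ k, Real.negMulLog (p k))) := by
  set A : ℝ := ∑ j, a j with hA
  have hApos : 0 < A := Finset.sum_pos (fun j _ => ha j) ⟨⟨0, hK⟩, Finset.mem_univ _⟩
  have hSeq : ∀ n : ℕ, (∑ j, (a j + (n:ℝ) * p j)) = A + n := by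
    intro n
    rw [Finset.sum_add_distrib, ← Finset.mul_sum, hpsum, mul_one]
  -- reduce to per-term convergence
  apply Filter.Tendsto.congr
    (f₁ := fun n : ℕ => ∑ k, ((a k + n * p k) / (A + n)) *
      (digamma ((A + n) + 1) - digamma ((a k + n * p k) + 1)))
  · intro n; rw [hSeq n]
  apply tendsto_finset_sum
  intro k _
  -- notation
  set α : ℕ → ℝ := fun n => a k + (n:ℝ) * p k with hα
  have hαpos : ∀ n : ℕ, 0 < α n := fun n => by
    have := (hp k); have := (ha k); positivity
  have hSpos : ∀ n : ℕ, 0 < A + (n:ℝ) := fun n => by positivity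
  -- limits of the pieces
  have hαtop : Tendsto α atTop atTop := by
    apply tendsto_atTop_add_const_left
    exact (tendsto_natCast_atTop_atTop (R := ℝ)).atTop_mul_const (hp k)
  have hStop : Tendsto (fun n : ℕ => A + (n:ℝ)) atTop atTop :=
    tendsto_atTop_add_const_left _ _ (tendsto_natCast_atTop_atTop (R := ℝ))
  have h1 : Tendsto (fun n : ℕ => digamma (α n + 1) - Real.log (α n)) atTop (nhds 0) :=
    digamma_sub_log_tendsto.comp hαtop
  have h2 : Tendsto (fun n : ℕ => digamma ((A + n) + 1) - Real.log (A + n)) atTop (nhds 0) :=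
    digamma_sub_log_tendsto.comp hStop
  have hratio : Tendsto (fun n : ℕ => α n / (A + n)) atTop (nhds (p k)) :=
    ratio_tendsto (a k) (p k) A hApos
  have hlog : Tendsto (fun n : ℕ => Real.log (α n / (A + n))) atTop (nhds (Real.log (p k))) :=
    (Real.continuousAt_log (hp k).ne').tendsto.comp hratio
  -- combine
  have hmain : Tendsto (fun n : ℕ => (α n / (A + n)) *
      ((digamma ((A + n) + 1) - Real.log (A + n)) - (digamma (α n + 1) - Real.log (α n))
        - Real.log (α n / (A + n))))
      atTop (nhds (p k * ((0 : ℝ) - 0 - Real.log (p k)))) :=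
    hratio.mul ((h2.sub h1).sub hlog)
  have hval : p k * ((0 : ℝ) - 0 - Real.log (p k)) = Real.negMulLog (p k) := by
    rw [Real.negMulLog]; ring
  rw [hval] at hmain
  apply hmain.congr
  intro n
  rw [Real.log_div (hαpos n).ne' (hSpos n).ne']
  ring
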